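/- arXiv:2103.00451 — 2 statements merged into one kernel-verified Lean document; each statement's English description precedes it below -/
import Mathlib

section
/- Let G be a finite simple graph with a nonempty vertex set V, and for a nonempty vertex set S let ρ(S) = 2·e(S)/|S| be the average degree of the subgraph induced by S. Consider the greedy peeling process that produces a sequence of vertex sets V = S₀ ⊋ S₁ ⊋ ⋯ ⊋ S_{|V|-1}, where each S_{j+1} is obtained from S_j by removing a vertex of minimum degree in the subgraph induced by S_j. Then max_j ρ(S_j) ≥ ρ*/2, where ρ* = max{ρ(S) : ∅ ≠ S ⊆ V} is the maximum density over all nonempty induced subgraphs of G. -/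
open Finset

/-- Twice the number of edges of `G` with both endpoints in `S`,
i.e. the number of *ordered* adjacent pairs inside `S`. -/
def twiceEdgeCount {V : Type*} [DecidableEq V] (G : SimpleGraph V)
    [DecidableRel G.Adj] (S : Finset V) : ℕ :=
  ((S ×ˢ S).filter fun p => G.Adj p.1 p.2).card

/-- The density `ρ(S) = 2·e(S)/|S|` of the subgraph of `G` induced by `S`:
the average degree of the induced subgraph. -/
noncomputable def density {V : Type*} [DecidableEq V] (G : SimpleGraph V)
    [DecidableRel G.Adj] (S : Finset V) : ℝ :=
  (twiceEdgeCount G S : ℝ) / (S.card : ℝ)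

/-- The degree of `v` in the subgraph of `G` induced by `S`. -/
def inducedDegree {V : Type*} [DecidableEq V] (G : SimpleGraph V)
    [DecidableRel G.Adj] (S : Finset V) (v : V) : ℕ :=
  (S.filter fun u => G.Adj v u).card

section Aux

variable {V : Type*} [DecidableEq V] (G : SimpleGraph V) [DecidableRel G.Adj]

lemma twiceEdgeCount_eq_sum (S : Finset V) :
    twiceEdgeCount G S = ∑ v ∈ S, inducedDegree G S v := by
  unfold twiceEdgeCount inducedDegree
  rw [Finset.card_filter, Finset.sum_product]
  exact Finset.sum_congr rfl fun v _ => by rw [Finset.card_filter]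

lemma inducedDegree_mono {A T : Finset V} (h : A ⊆ T) (v : V) :
    inducedDegree G A v ≤ inducedDegree G T v :=
  Finset.card_le_card (Finset.filter_subset_filter _ h)

lemma density_nonneg (S : Finset V) : 0 ≤ density G S :=
  div_nonneg (by positivity) (by positivity)

lemma twiceEdgeCount_singleton (v : V) : twiceEdgeCount G {v} = 0 := by
  simp [twiceEdgeCount, Finset.filter_eq_empty_iff]

lemma density_card_one {A : Finset V} (h : A.card = 1) : density G A = 0 := by
  obtain ⟨a, rfl⟩ := Finset.card_eq_one.mp h
  simp [density, twiceEdgeCount_singleton]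

lemma twiceEdgeCount_erase {A : Finset V} {v : V} (hv : v ∈ A) :
    twiceEdgeCount G A = twiceEdgeCount G (A.erase v) + 2 * inducedDegree G A v := by
  have step : ∀ u ∈ A.erase v, inducedDegree G A u
      = inducedDegree G (A.erase v) u + (if G.Adj u v then 1 else 0) := by
    intro u hu
    unfold inducedDegree
    conv_lhs => rw [← Finset.insert_erase hv]
    rw [Finset.filter_insert]
    split_ifs with h
    · rw [Finset.card_insert_of_notMem (by simp)]
    · simp
  have hfilter : (A.erase v).filter (fun u => G.Adj u v)
      = A.filter (fun u => G.Adj v u) := by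
    ext u
    simp only [Finset.mem_filter, Finset.mem_erase]
    constructor
    · rintro ⟨⟨_, hu⟩, h⟩; exact ⟨hu, h.symm⟩
    · rintro ⟨hu, h⟩; exact ⟨⟨(G.ne_of_adj h).symm, hu⟩, h.symm⟩
  rw [twiceEdgeCount_eq_sum, twiceEdgeCount_eq_sum,
    ← Finset.add_sum_erase A _ hv, Finset.sum_congr rfl step, Finset.sum_add_distrib]
  have : (∑ u ∈ A.erase v, if G.Adj u v then 1 else 0)
      = inducedDegree G A v := by
    rw [← Finset.card_filter, hfilter]; rfl
  rw [this]
  ring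

lemma min_le_density {T : Finset V} {v : V} (hv : v ∈ T)
    (hmin : ∀ u ∈ T, inducedDegree G T v ≤ inducedDegree G T u) :
    (inducedDegree G T v : ℝ) ≤ density G T := by
  have hpos : (0 : ℝ) < T.card := by
    exact_mod_cast Finset.card_pos.mpr ⟨v, hv⟩
  have hsum : T.card * inducedDegree G T v ≤ twiceEdgeCount G T := by
    rw [twiceEdgeCount_eq_sum]
    simpa using Finset.card_nsmul_le_sum T _ _ hmin
  rw [density, le_div_iff₀ hpos]
  calc (inducedDegree G T v : ℝ) * T.card = T.card * inducedDegree G T v := by ring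
    _ ≤ twiceEdgeCount G T := by exact_mod_cast hsum

lemma half_density_le_deg {A' : Finset V} {v : V} (hv : v ∈ A')
    (hopt : density G (A'.erase v) ≤ density G A') :
    density G A' / 2 ≤ inducedDegree G A' v := by
  rcases le_or_gt A'.card 1 with h1 | h1
  · have : A'.card = 1 := le_antisymm h1 (Finset.card_pos.mpr ⟨v, hv⟩)
    rw [density_card_one G this]
    simp only [zero_div]
    positivity
  · have hee := twiceEdgeCount_erase G hv
    have hcard : (A'.erase v).card = A'.card - 1 := Finset.card_erase_of_mem hv
    have hnR : (2 : ℝ) ≤ (A'.card : ℝ) := by exact_mod_cast h1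
    have heR : (twiceEdgeCount G A' : ℝ)
        = (twiceEdgeCount G (A'.erase v) : ℝ) + 2 * (inducedDegree G A' v : ℝ) := by
      exact_mod_cast hee
    have hcR : ((A'.erase v).card : ℝ) = (A'.card : ℝ) - 1 := by
      rw [hcard, Nat.cast_sub (by omega : 1 ≤ A'.card)]
      norm_num
    rw [density, density, hcR] at hopt
    rw [density]
    set x := (twiceEdgeCount G (A'.erase v) : ℝ) with hx
    set d := (inducedDegree G A' v : ℝ) with hdd
    set nn := (A'.card : ℝ) with hnn
    rw [heR] at hopt ⊢
    have h1pos : (0:ℝ) < nn - 1 := by linarith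
    have hnpos : (0:ℝ) < nn := by linarith
    rw [div_le_div_iff₀ h1pos hnpos] at hopt
    have hd0 : (0:ℝ) ≤ d := Nat.cast_nonneg _
    have hx0 : (0:ℝ) ≤ x := Nat.cast_nonneg _
    rw [div_div, div_le_iff₀ (by positivity)]
    nlinarith

end Aux

/-- Greedy peeling is a 2-approximation for the densest subgraph.  If
`S 0 = V` and each `S (j+1)` (for `j + 1 ≤ |V| - 1`) is obtained from `S j`
by removing a vertex of minimum degree in the subgraph induced by `S j`,
then for every nonempty vertex subset `A` there is an index
`j ≤ |V| - 1` of the peeling sequence with `ρ(A)/2 ≤ ρ(S j)`, i.e.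
`max_j ρ(S j) ≥ ρ*/2`. -/
theorem greedy_peeling_two_approx
    {V : Type*} [Fintype V] [DecidableEq V] [Nonempty V]
    (G : SimpleGraph V) [DecidableRel G.Adj]
    (S : ℕ → Finset V)
    (h0 : S 0 = Finset.univ)
    (hstep : ∀ j, j + 1 ≤ Fintype.card V - 1 →
      ∃ v ∈ S j,
        (∀ u ∈ S j, inducedDegree G (S j) v ≤ inducedDegree G (S j) u) ∧
        S (j + 1) = (S j).erase v)
    (A : Finset V) (hA : A.Nonempty) :
    ∃ j ≤ Fintype.card V - 1, density G A / 2 ≤ density G (S j) := by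
  classical
  -- a densest subgraph A'
  obtain ⟨A', hA'mem, hmax⟩ :=
    Finset.exists_max_image ((Finset.univ.powerset).filter Finset.Nonempty)
      (density G) ⟨A, by simp [hA]⟩
  have hA'ne : A'.Nonempty := (Finset.mem_filter.mp hA'mem).2
  have hopt : ∀ B : Finset V, B.Nonempty → density G B ≤ density G A' := by
    intro B hB; exact hmax B (by simp [hB])
  set N := Fintype.card V - 1 with hN
  have hcards : ∀ j, j ≤ N → (S j).card = Fintype.card V - j := by
    intro j
    induction j with
    | zero => intro _; simp [h0]
    | succ k ih =>
      intro h
      obtain ⟨v, hv, _, hS⟩ := hstep k h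
      have hcV : 1 ≤ Fintype.card V := Fintype.card_pos
      rw [hS, Finset.card_erase_of_mem hv, ih (by omega)]
      omega
  let P : ℕ → Prop := fun j => A' ⊆ S j
  have hP0 : P 0 := by show A' ⊆ S 0; rw [h0]; exact Finset.subset_univ _
  set J := Nat.findGreatest P N with hJ
  have hJle : J ≤ N := Nat.findGreatest_le N
  have hJsub : A' ⊆ S J := Nat.findGreatest_spec (Nat.zero_le N) hP0
  rcases eq_or_lt_of_le hJle with hJN | hJN
  · -- A' is contained in the last set, which has one vertex
    have hcV : 1 ≤ Fintype.card V := Fintype.card_pos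
    have h1 : (S J).card = 1 := by
      rw [hcards J hJle, hJN]; omega
    have hA'1 : A'.card = 1 :=
      le_antisymm (h1 ▸ Finset.card_le_card hJsub) (Finset.card_pos.mpr hA'ne)
    have hA0 : density G A = 0 :=
      le_antisymm (by rw [← density_card_one G hA'1]; exact hopt A hA)
        (density_nonneg G A)
    exact ⟨0, Nat.zero_le _, by rw [hA0]; simpa using density_nonneg G (S 0)⟩
  · have hnot : ¬ P (J + 1) :=
      Nat.findGreatest_is_greatest (Nat.lt_succ_self J) (by omega)
    obtain ⟨v, hvS, hmin, hSstep⟩ := hstep J (by omega)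
    have hvA' : v ∈ A' := by
      by_contra h
      refine hnot ?_
      show A' ⊆ S (J + 1)
      rw [hSstep]
      intro x hx
      exact Finset.mem_erase.mpr ⟨fun e => h (e ▸ hx), hJsub hx⟩
    have hkey : density G (A'.erase v) ≤ density G A' := by
      by_cases h : (A'.erase v).Nonempty
      · exact hopt _ h
      · rw [Finset.not_nonempty_iff_eq_empty.mp h]
        have : density G (∅ : Finset V) = 0 := by simp [density]
        rw [this]; exact density_nonneg G A'
    refine ⟨J, hJle, ?_⟩
    calc density G A / 2 ≤ density G A' / 2 := by linarith [hopt A hA]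
      _ ≤ inducedDegree G A' v := half_density_le_deg G hvA' hkey
      _ ≤ inducedDegree G (S J) v := by exact_mod_cast inducedDegree_mono G hJsub v
      _ ≤ density G (S J) := min_le_density G hvS hmin
end

section
/- Let T be a finite linearly ordered set (e.g., Fin n for n ≥ 1) and let A, B ⊆ T be nonempty subsets. If π is a permutation of T chosen uniformly at random, then the probability that min_{t∈A} π(t) = min_{t∈B} π(t) equals the Jaccard similarity |A ∩ B| / |A ∪ B|. -/
open Finset

/-- **min-wise hashing.**
Let `T` be a finite linearly ordered set and `A, B ⊆ T` nonempty subsets.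
For a uniformly random permutation `π` of `T`, the probability that
`min_{t∈A} π t = min_{t∈B} π t` equals the Jaccard similarity
`|A ∩ B| / |A ∪ B|`.  (The probability is expressed as the fraction of
permutations with equal min-hash values.) -/
theorem minhash_collision_probability_eq_jaccard
    {T : Type*} [Fintype T] [LinearOrder T]
    (A B : Finset T) (hA : A.Nonempty) (hB : B.Nonempty) :
    ((Finset.univ.filter fun π : Equiv.Perm T =>
          A.inf' hA (fun t => π t) = B.inf' hB (fun t => π t)).card : ℝ) /
        (Fintype.card (Equiv.Perm T) : ℝ)
      = ((A ∩ B).card : ℝ) / ((A ∪ B).card : ℝ) := by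
  classical
  set U : Finset T := A ∪ B with hUdef
  have hU : U.Nonempty := hA.mono subset_union_left
  -- Q t π : π attains its minimum over U at t
  set Q : T → Equiv.Perm T → Prop := fun t π => ∀ s ∈ U, π t ≤ π s with hQdef
  -- equivalence of the event with the argmin being in A ∩ B
  have hiff : ∀ π : Equiv.Perm T,
      (A.inf' hA (fun t => π t) = B.inf' hB (fun t => π t)) ↔ ∃ t ∈ A ∩ B, Q t π := by
    intro π
    constructor
    · intro h
      obtain ⟨t, htA, ht⟩ := Finset.exists_mem_eq_inf' hA (fun t => π t)
      obtain ⟨t', ht'B, ht'⟩ := Finset.exists_mem_eq_inf' hB (fun t => π t)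
      have : π t = π t' := by rw [← ht, ← ht', h]
      have htt : t = t' := π.injective this
      refine ⟨t, Finset.mem_inter.mpr ⟨htA, htt ▸ ht'B⟩, ?_⟩
      intro s hs
      rcases Finset.mem_union.mp hs with hsA | hsB
      · rw [← ht]; exact Finset.inf'_le _ hsA
      · rw [← ht, h]; exact Finset.inf'_le _ hsB
    · rintro ⟨t, ht, hQ⟩
      obtain ⟨htA, htB⟩ := Finset.mem_inter.mp ht
      have hAeq : A.inf' hA (fun t => π t) = π t :=
        le_antisymm (Finset.inf'_le _ htA)
          (Finset.le_inf' _ _ fun s hs => hQ s (Finset.mem_union_left _ hs))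
      have hBeq : B.inf' hB (fun t => π t) = π t :=
        le_antisymm (Finset.inf'_le _ htB)
          (Finset.le_inf' _ _ fun s hs => hQ s (Finset.mem_union_right _ hs))
      rw [hAeq, hBeq]
  -- disjointness of the fibers over U
  have hdisj : ∀ t ∈ U, ∀ t' ∈ U, t ≠ t' →
      Disjoint (Finset.univ.filter (fun π : Equiv.Perm T => Q t π))
        (Finset.univ.filter (fun π : Equiv.Perm T => Q t' π)) := by
    intro t ht t' ht' htt'
    refine Finset.disjoint_left.mpr ?_
    intro π hπ hπ'
    have h1 := (Finset.mem_filter.mp hπ).2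
    have h2 := (Finset.mem_filter.mp hπ').2
    exact htt' (π.injective (le_antisymm (h1 t' ht') (h2 t ht)))
  -- the key swap lemma
  have key : ∀ t ∈ U, ∀ t' ∈ U, ∀ π : Equiv.Perm T, Q t π →
      Q t' (π.trans (Equiv.swap (π t) (π t'))) := by
    intro t ht t' ht' π hQt s hs
    have h1 : (π.trans (Equiv.swap (π t) (π t'))) t' = π t := by
      simp [Equiv.swap_apply_right]
    rw [h1]
    have h2 : (π.trans (Equiv.swap (π t) (π t'))) s = Equiv.swap (π t) (π t') (π s) := rfl
    rw [h2]
    rcases eq_or_ne (π s) (π t) with h | h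
    · rw [h, Equiv.swap_apply_left]; exact hQt t' ht'
    · rcases eq_or_ne (π s) (π t') with h' | h'
      · rw [h', Equiv.swap_apply_right]
      · rw [Equiv.swap_apply_of_ne_of_ne h h']; exact hQt s hs
  -- constant fiber size
  have hconst : ∀ t ∈ U, ∀ t' ∈ U,
      (Finset.univ.filter (fun π : Equiv.Perm T => Q t π)).card
        = (Finset.univ.filter (fun π : Equiv.Perm T => Q t' π)).card := by
    intro t ht t' ht'
    refine Finset.card_bij' (fun π _ => π.trans (Equiv.swap (π t) (π t')))
      (fun π _ => π.trans (Equiv.swap (π t') (π t))) ?_ ?_ ?_ ?_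
    · intro π hπ
      refine Finset.mem_filter.mpr ⟨Finset.mem_univ _, ?_⟩
      exact key t ht t' ht' π (Finset.mem_filter.mp hπ).2
    · intro π hπ
      refine Finset.mem_filter.mpr ⟨Finset.mem_univ _, ?_⟩
      exact key t' ht' t ht π (Finset.mem_filter.mp hπ).2
    · intro π hπ
      ext x
      simp [Equiv.trans_apply, Equiv.swap_apply_left, Equiv.swap_apply_right,
        Equiv.swap_apply_self]
    · intro π hπ
      ext x
      simp [Equiv.trans_apply, Equiv.swap_apply_left, Equiv.swap_apply_right,
        Equiv.swap_apply_self]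
  obtain ⟨t₀, ht₀⟩ := hU
  set c : ℕ := (Finset.univ.filter (fun π : Equiv.Perm T => Q t₀ π)).card with hcdef
  -- count over any subset of U
  have hcount : ∀ s : Finset T, s ⊆ U →
      (s.biUnion (fun t => Finset.univ.filter (fun π : Equiv.Perm T => Q t π))).card
        = s.card * c := by
    intro s hs
    rw [Finset.card_biUnion (fun t ht t' ht' h => hdisj t (hs ht) t' (hs ht') h)]
    rw [Finset.sum_congr rfl (fun t ht => (hconst t (hs ht) t₀ ht₀ : _))]
    simp [mul_comm]
    exact Or.inl hcdef.symm
  -- the event set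
  have hAB : (Finset.univ.filter fun π : Equiv.Perm T =>
        A.inf' hA (fun t => π t) = B.inf' hB (fun t => π t))
      = (A ∩ B).biUnion (fun t => Finset.univ.filter (fun π : Equiv.Perm T => Q t π)) := by
    ext π
    simp only [Finset.mem_filter, Finset.mem_biUnion, Finset.mem_univ, true_and]
    rw [hiff π]
  have hABcard : (Finset.univ.filter fun π : Equiv.Perm T =>
        A.inf' hA (fun t => π t) = B.inf' hB (fun t => π t)).card = (A ∩ B).card * c := by
    rw [hAB, hcount (A ∩ B) (by rw [hUdef]; exact (Finset.inter_subset_left).trans subset_union_left)]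
  -- all permutations
  have huniv : (Finset.univ : Finset (Equiv.Perm T))
      = U.biUnion (fun t => Finset.univ.filter (fun π : Equiv.Perm T => Q t π)) := by
    ext π
    simp only [Finset.mem_biUnion, Finset.mem_univ, Finset.mem_filter, true_and, true_iff]
    obtain ⟨t, ht, hmin⟩ := Finset.exists_min_image U (fun t => π t) ⟨t₀, ht₀⟩
    exact ⟨t, ht, hmin⟩
  have hN : Fintype.card (Equiv.Perm T) = U.card * c := by
    rw [← Finset.card_univ, huniv, hcount U (le_refl U)]
  -- c is positive
  have hc : c ≠ 0 := by
    intro h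
    have := hN
    rw [h, mul_zero] at this
    exact (Fintype.card_pos).ne' this
  rw [hABcard, hN]
  push_cast
  rw [mul_div_mul_right _ _ (by exact_mod_cast hc : (c : ℝ) ≠ 0)]
end
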